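/- arXiv:2205.02685 — 3 statements merged into one kernel-verified Lean document; each statement's English description precedes it below -/
import Mathlib

section
/- Every locally almost square Banach space has the slice diameter 2 property: every slice of the unit ball has diameter 2. -/
/-- A real Banach space `X` is locally almost square (LASQ): for every `ε > 0` and every
unit vector `x` there is a unit vector `y` with `‖x ± y‖ ≤ 1 + ε`. -/
def IsLASQ (X : Type*) [NormedAddCommGroup X] [NormedSpace ℝ X] : Prop :=
  ∀ ε : ℝ, 0 < ε → ∀ x : X, ‖x‖ = 1 →
    ∃ y : X, ‖y‖ = 1 ∧ ‖x + y‖ ≤ 1 + ε ∧ ‖x - y‖ ≤ 1 + ε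

/-- Every locally almost square Banach space has the slice diameter 2 property:
every slice `{z ∈ B_X : f z > 1 - δ}` of the unit ball has diameter 2. -/
theorem isLASQ_slice_diam_two {X : Type*} [NormedAddCommGroup X] [NormedSpace ℝ X]
    [CompleteSpace X] (h : IsLASQ X)
    (f : X →L[ℝ] ℝ) (hf : ‖f‖ = 1) (δ : ℝ) (hδ : 0 < δ) :
    Metric.diam {z : X | ‖z‖ ≤ 1 ∧ 1 - δ < f z} = 2 := by
  set S := {z : X | ‖z‖ ≤ 1 ∧ 1 - δ < f z} with hS
  have hfz : ∀ z : X, f z ≤ ‖z‖ := by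
    intro z
    calc f z ≤ |f z| := le_abs_self _
    _ = ‖f z‖ := (Real.norm_eq_abs _).symm
    _ ≤ ‖f‖ * ‖z‖ := f.le_opNorm z
    _ = ‖z‖ := by rw [hf, one_mul]
  have hSb : Bornology.IsBounded S := by
    apply (Metric.isBounded_closedBall (x := (0:X)) (r := 1)).subset
    intro z hz
    simpa [Metric.mem_closedBall] using hz.1
  have hub : Metric.diam S ≤ 2 := by
    apply Metric.diam_le_of_forall_dist_le (by norm_num)
    intro u hu v hv
    calc dist u v = ‖u - v‖ := dist_eq_norm u v
    _ ≤ ‖u‖ + ‖v‖ := norm_sub_le u v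
    _ ≤ 1 + 1 := add_le_add hu.1 hv.1
    _ = 2 := by norm_num
  have hlb : 2 ≤ Metric.diam S := by
    apply le_of_forall_sub_le
    intro t ht
    set ε := min (t/2) (δ/8) with hε
    have hε0 : 0 < ε := lt_min (by linarith) (by linarith)
    have hεt : ε ≤ t/2 := min_le_left _ _
    have hεδ : ε ≤ δ/8 := min_le_right _ _
    set η := min (δ/8) (1/2 : ℝ) with hη
    have hη0 : 0 < η := lt_min (by linarith) (by norm_num)
    have hηδ : η ≤ δ/8 := min_le_left _ _
    have hη2 : η ≤ 1/2 := min_le_right _ _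
    -- find a unit vector x̂ with f x̂ > 1 - η
    obtain ⟨x, hx1, hx2⟩ := f.exists_lt_apply_of_lt_opNorm (r := 1 - η)
      (by rw [hf]; linarith)
    rw [Real.norm_eq_abs] at hx2
    obtain ⟨x₀, hx₀1, hx₀2⟩ : ∃ x₀ : X, ‖x₀‖ < 1 ∧ 1 - η < f x₀ := by
      rcases lt_abs.mp hx2 with h1 | h1
      · exact ⟨x, hx1, h1⟩
      · exact ⟨-x, by simpa using hx1, by simpa using h1⟩
    have hfx₀pos : 0 < f x₀ := by linarith
    have hx₀ne : ‖x₀‖ ≠ 0 := by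
      intro h0
      rw [norm_eq_zero] at h0
      simp [h0] at hfx₀pos
    have hx₀pos : 0 < ‖x₀‖ := lt_of_le_of_ne (norm_nonneg _) (Ne.symm hx₀ne)
    set xh := ‖x₀‖⁻¹ • x₀ with hxh
    have hxhn : ‖xh‖ = 1 := by
      rw [hxh, norm_smul, norm_inv, norm_norm, inv_mul_cancel₀ hx₀ne]
    have hfxh : 1 - η < f xh := by
      have : f xh = ‖x₀‖⁻¹ * f x₀ := by rw [hxh, map_smul]; rfl
      rw [this]
      have h1 : 1 ≤ ‖x₀‖⁻¹ := by
        rw [le_inv_comm₀ one_pos hx₀pos, inv_one]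
        exact hx₀1.le
      nlinarith
    obtain ⟨y, hy, hxy, hxy'⟩ := h ε hε0 xh hxhn
    have h1ε : (0:ℝ) < 1 + ε := by linarith
    set u := (1+ε)⁻¹ • (xh + y) with hu
    set v := (1+ε)⁻¹ • (xh - y) with hv
    have hnu : ‖u‖ ≤ 1 := by
      rw [hu, norm_smul, norm_inv, Real.norm_eq_abs, abs_of_pos h1ε]
      rw [inv_mul_le_iff₀ h1ε]
      linarith
    have hnv : ‖v‖ ≤ 1 := by
      rw [hv, norm_smul, norm_inv, Real.norm_eq_abs, abs_of_pos h1ε]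
      rw [inv_mul_le_iff₀ h1ε]
      linarith
    have hfy1 : f xh - f y ≤ 1 + ε := by
      have := hfz (xh - y)
      rw [map_sub] at this
      linarith [this.trans hxy']
    have hfy2 : f xh + f y ≤ 1 + ε := by
      have := hfz (xh + y)
      rw [map_add] at this
      linarith [this.trans hxy]
    have key : (1 - δ) * (1 + ε) < 2 * f xh - (1 + ε) := by nlinarith [mul_pos hδ hε0, hfxh, hηδ, hεδ]
    have hfu : 1 - δ < f u := by
      have heq : f u = (f xh + f y) / (1+ε) := by
        rw [hu]
        simp only [map_smul, map_add, smul_eq_mul]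
        ring
      rw [heq, lt_div_iff₀ h1ε]
      linarith [key, hfy1]
    have hfv : 1 - δ < f v := by
      have heq : f v = (f xh - f y) / (1+ε) := by
        rw [hv]
        simp only [map_smul, map_sub, smul_eq_mul]
        ring
      rw [heq, lt_div_iff₀ h1ε]
      linarith [key, hfy2]
    have huv : u - v = (1+ε)⁻¹ • ((2:ℝ) • y) := by
      rw [hu, hv, ← smul_sub]
      congr 1
      module
    have hduv : dist u v = 2 / (1 + ε) := by
      rw [dist_eq_norm, huv, norm_smul, norm_smul, hy, norm_inv, Real.norm_eq_abs,
        abs_of_pos h1ε]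
      norm_num
      ring
    have hdlb : 2 - t ≤ dist u v := by
      rw [hduv, le_div_iff₀ h1ε]
      nlinarith [mul_pos ht hε0, hεt]
    calc 2 - t ≤ dist u v := hdlb
    _ ≤ Metric.diam S := Metric.dist_le_diam_of_mem hSb ⟨hnu, hfu⟩ ⟨hnv, hfv⟩
  linarith
end

section
/- (McShane-type extension bound used in the paper) Let M be a metric space, B an open ball B(p, r) in M, f: M → ℝ a 1-Lipschitz function, and q ∈ B with q ≠ p and d(p,q) ≤ θr for some θ > 0. Define g on (M \ B) ∪ {p, q} by g = f on M \ B, g(q) = f(q), and g(p) = f(q) + d(p,q). Then g is Lipschitz on its domain with Lipschitz constant at most 1 + 2θ. -/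
open Classical in
/-- McShane-type extension bound: modifying a 1-Lipschitz function `f` inside the open
ball `B(p,r)` by setting `g p = f q + d(p,q)` and `g q = f q` (where `d(p,q) ≤ θ r`)
yields a function that is `(1 + 2θ)`-Lipschitz on `(M \ B(p,r)) ∪ {p, q}`. -/
theorem mcshane_modification_lipschitz {M : Type*} [MetricSpace M]
    (p q : M) (r θ : ℝ) (hr : 0 < r) (hθ : 0 < θ)
    (f : M → ℝ) (hf : LipschitzWith 1 f)
    (hq : q ∈ Metric.ball p r) (hqp : q ≠ p) (hd : dist p q ≤ θ * r) :
    ∀ a ∈ (Metric.ball p r)ᶜ ∪ {p, q}, ∀ b ∈ (Metric.ball p r)ᶜ ∪ {p, q},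
      |(if a = p then f q + dist p q else if a = q then f q else f a) -
        (if b = p then f q + dist p q else if b = q then f q else f b)| ≤
        (1 + 2 * θ) * dist a b := by
  have hf' : ∀ x y : M, |f x - f y| ≤ dist x y := by
    intro x y
    have := hf.dist_le_mul x y
    rwa [Real.dist_eq, NNReal.coe_one, one_mul] at this
  have key : ∀ x, x ∈ (Metric.ball p r)ᶜ →
      |f q + dist p q - f x| ≤ (1 + 2 * θ) * dist p x := by
    intro x hx
    have hx' : r ≤ dist p x := by
      simpa [Metric.mem_ball, dist_comm, not_lt] using hx
    have h1 : |f q - f x| ≤ dist q x := hf' q x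
    have h2 : dist q x ≤ dist q p + dist p x := dist_triangle _ _ _
    rw [dist_comm q p] at h2
    have h3 : dist p q ≤ θ * dist p x := hd.trans (by nlinarith)
    have heq : f q + dist p q - f x = (f q - f x) + dist p q := by ring
    rw [heq]
    calc |(f q - f x) + dist p q| ≤ |f q - f x| + |dist p q| := abs_add_le _ _
      _ = |f q - f x| + dist p q := by rw [abs_of_nonneg dist_nonneg]
      _ ≤ (1 + 2 * θ) * dist p x := by nlinarith
  intro a ha b hb
  have hmem : ∀ x, x ∈ (Metric.ball p r)ᶜ ∪ {p, q} → x ≠ p → x ≠ q →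
      x ∈ (Metric.ball p r)ᶜ := by
    intro x hx hxp hxq
    rcases hx with h | h
    · exact h
    · rcases h with h | h
      · exact absurd h hxp
      · exact absurd h hxq
  have hdpq : 0 ≤ dist p q := dist_nonneg
  by_cases hap : a = p
  · rw [hap, if_pos rfl]
    by_cases hbp : b = p
    · rw [hbp, if_pos rfl]
      simp only [sub_self, abs_zero]
      positivity
    · rw [if_neg hbp]
      by_cases hbq : b = q
      · rw [hbq, if_pos rfl]
        rw [show f q + dist p q - f q = dist p q by ring, abs_of_nonneg dist_nonneg]
        nlinarith [dist_nonneg (x := p) (y := q)]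
      · rw [if_neg hbq]
        exact key b (hmem b hb hbp hbq)
  · rw [if_neg hap]
    by_cases haq : a = q
    · rw [haq, if_pos rfl]
      by_cases hbp : b = p
      · rw [hbp, if_pos rfl, abs_sub_comm, dist_comm q p]
        rw [show f q + dist p q - f q = dist p q by ring, abs_of_nonneg dist_nonneg]
        nlinarith [dist_nonneg (x := p) (y := q)]
      · rw [if_neg hbp]
        by_cases hbq : b = q
        · rw [hbq, if_pos rfl]
          simp only [sub_self, abs_zero]
          positivity
        · rw [if_neg hbq]
          have h1 := hf' q b
          have h2 : 0 ≤ 2 * θ * dist q b := by positivity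
          linarith
    · rw [if_neg haq]
      have haB := hmem a ha hap haq
      by_cases hbp : b = p
      · rw [hbp, if_pos rfl, abs_sub_comm, dist_comm a p]
        exact key a haB
      · rw [if_neg hbp]
        by_cases hbq : b = q
        · rw [hbq, if_pos rfl]
          have h1 := hf' a q
          have h2 : 0 ≤ 2 * θ * dist a q := by positivity
          linarith
        · rw [if_neg hbq]
          have h1 := hf' a b
          have h2 : 0 ≤ 2 * θ * dist a b := by positivity
          linarith
end

section
/- Let X be a Banach space, x ∈ S_X, ε > 0, and suppose y ∈ X and elements z_j ∈ X, α_j > 0 (j = 1,…,m) satisfy: ‖x − Σ α_j z_j‖ < ε/5, Σ α_j < 1 + ε/5, ‖z_j ± y_j‖ ≤ 1 + ε/(5 m α_j) for all j where y = Σ α_j y_j, and there is g ∈ X* with ‖g‖ ≤ 1 and g(y_j) = 1 for all j. Then ‖y‖ > 1 − ε/5, ‖y‖ < 1 + 2ε/5, and ‖x ± y/‖y‖‖ ≤ 1 + ε. -/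
/-- Abstract reduction step for LASQ of `F(M)`: if `x` is a unit vector approximated by a
convex-type combination `∑ α j • z j` of unit vectors, and for each `j` there is `y j`
with `‖z j ± y j‖ ≤ 1 + ε/(5 m α j)`, and a norm-one functional `g` with `g (y j) = 1`,
then `y = ∑ α j • y j` satisfies `1 - ε/5 < ‖y‖ < 1 + 2ε/5` and `‖x ± y/‖y‖‖ ≤ 1 + ε`. -/
theorem lasq_reduction_step {X : Type*} [NormedAddCommGroup X] [NormedSpace ℝ X]
    (x : X) (hx : ‖x‖ = 1) (ε : ℝ) (hε : 0 < ε) (m : ℕ)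
    (α : Fin m → ℝ) (hα : ∀ j, 0 < α j)
    (z yv : Fin m → X) (hz : ∀ j, ‖z j‖ = 1)
    (y : X) (hy : y = ∑ j, α j • yv j)
    (h1 : ‖x - ∑ j, α j • z j‖ < ε / 5)
    (h2 : ∑ j, α j < 1 + ε / 5)
    (h3 : ∀ j, ‖z j + yv j‖ ≤ 1 + ε / (5 * m * α j) ∧
      ‖z j - yv j‖ ≤ 1 + ε / (5 * m * α j))
    (g : X →L[ℝ] ℝ) (hg : ‖g‖ ≤ 1) (hgy : ∀ j, g (yv j) = 1) :
    1 - ε / 5 < ‖y‖ ∧ ‖y‖ < 1 + 2 * ε / 5 ∧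
      ‖x + ‖y‖⁻¹ • y‖ ≤ 1 + ε ∧ ‖x - ‖y‖⁻¹ • y‖ ≤ 1 + ε := by
  rcases Nat.eq_zero_or_pos m with hm | hm
  · subst hm
    simp only [Finset.univ_eq_empty, Finset.sum_empty] at hy h1 h2
    rw [sub_zero, hx] at h1
    subst hy
    simp only [norm_zero, smul_zero, add_zero, sub_zero, hx]
    refine ⟨by linarith, by linarith, by linarith, by linarith⟩
  · have hm' : (0:ℝ) < m := by exact_mod_cast hm
    haveI : Nonempty (Fin m) := Fin.pos_iff_nonempty.mp hm
    set S := ∑ j, α j with hS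
    have hS0 : 0 < S := Finset.sum_pos (fun j _ => hα j) Finset.univ_nonempty
    -- ‖∑ α z‖ ≤ S
    have hnormz : ‖∑ j, α j • z j‖ ≤ S := by
      calc ‖∑ j, α j • z j‖ ≤ ∑ j, ‖α j • z j‖ := norm_sum_le _ _
        _ = ∑ j, α j := Finset.sum_congr rfl fun j _ => by
            rw [norm_smul, hz j, mul_one, Real.norm_eq_abs, abs_of_pos (hα j)]
    have hS1 : 1 - ε / 5 < S := by
      have h := norm_sub_norm_le x (∑ j, α j • z j)
      rw [hx] at h
      linarith
    -- lower bound on ‖y‖ via g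
    have hgyS : g y = S := by
      rw [hy, map_sum]
      simp only [map_smul, hgy, smul_eq_mul, mul_one]
      exact hS.symm
    have hylow : S ≤ ‖y‖ := by
      have h := g.le_opNorm y
      have h2' : |g y| ≤ ‖y‖ := by
        calc |g y| = ‖g y‖ := rfl
          _ ≤ ‖g‖ * ‖y‖ := h
          _ ≤ 1 * ‖y‖ := mul_le_mul_of_nonneg_right hg (norm_nonneg y)
          _ = ‖y‖ := one_mul _
      calc S = g y := hgyS.symm
        _ ≤ |g y| := le_abs_self _
        _ ≤ ‖y‖ := h2'
    -- ‖yv j‖ bound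
    have hyj : ∀ j, ‖yv j‖ ≤ 1 + ε / (5 * m * α j) := by
      intro j
      obtain ⟨h31, h32⟩ := h3 j
      have key : ‖(z j + yv j) - (z j - yv j)‖ ≤ 2 + 2 * (ε / (5 * m * α j)) :=
        le_trans (norm_sub_le _ _) (by linarith)
      have he : (z j + yv j) - (z j - yv j) = (2:ℝ) • yv j := by module
      rw [he, norm_smul, Real.norm_ofNat] at key
      linarith
    -- generic sum bound
    have hsum_pm : ∀ (w : Fin m → X), (∀ j, ‖w j‖ ≤ 1 + ε / (5 * m * α j)) →
        ‖∑ j, α j • w j‖ ≤ S + ε / 5 := by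
      intro w hw
      have hterm : ∀ j, α j * (1 + ε / (5 * (m:ℝ) * α j)) = α j + ε / (5 * m) := by
        intro j
        have h0 : α j ≠ 0 := (hα j).ne'
        have hm0 : (m:ℝ) ≠ 0 := hm'.ne'
        field_simp
      calc ‖∑ j, α j • w j‖ ≤ ∑ j, ‖α j • w j‖ := norm_sum_le _ _
        _ ≤ ∑ j, (α j + ε / (5 * m)) := by
            refine Finset.sum_le_sum fun j _ => ?_
            rw [norm_smul, Real.norm_eq_abs, abs_of_pos (hα j), ← hterm j]
            exact mul_le_mul_of_nonneg_left (hw j) (hα j).le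
        _ = S + ε / 5 := by
            rw [Finset.sum_add_distrib, Finset.sum_const, Finset.card_univ,
              Fintype.card_fin, nsmul_eq_mul]
            have hm0 : (m:ℝ) ≠ 0 := hm'.ne'
            field_simp
            rw [← hS]
            ring
    have hyupp : ‖y‖ ≤ S + ε / 5 := hy ▸ hsum_pm yv hyj
    have hplus : ‖x + y‖ < 1 + 3 * ε / 5 := by
      have e1 : x + y = (x - ∑ j, α j • z j) + ∑ j, α j • (z j + yv j) := by
        simp only [smul_add, Finset.sum_add_distrib, hy]
        abel
      rw [e1]
      have hb := hsum_pm (fun j => z j + yv j) (fun j => (h3 j).1)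
      calc ‖(x - ∑ j, α j • z j) + ∑ j, α j • (z j + yv j)‖
          ≤ ‖x - ∑ j, α j • z j‖ + ‖∑ j, α j • (z j + yv j)‖ := norm_add_le _ _
        _ < ε / 5 + (S + ε / 5) := add_lt_add_of_lt_of_le h1 hb
        _ < 1 + 3 * ε / 5 := by linarith
    have hminus : ‖x - y‖ < 1 + 3 * ε / 5 := by
      have e1 : x - y = (x - ∑ j, α j • z j) + ∑ j, α j • (z j - yv j) := by
        simp only [smul_sub, Finset.sum_sub_distrib, hy]
        abel
      rw [e1]
      have hb := hsum_pm (fun j => z j - yv j) (fun j => (h3 j).2)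
      calc ‖(x - ∑ j, α j • z j) + ∑ j, α j • (z j - yv j)‖
          ≤ ‖x - ∑ j, α j • z j‖ + ‖∑ j, α j • (z j - yv j)‖ := norm_add_le _ _
        _ < ε / 5 + (S + ε / 5) := add_lt_add_of_lt_of_le h1 hb
        _ < 1 + 3 * ε / 5 := by linarith
    have hy0 : 0 < ‖y‖ := lt_of_lt_of_le hS0 hylow
    have hylow' : 1 - ε / 5 < ‖y‖ := lt_of_lt_of_le hS1 hylow
    have hyupp' : ‖y‖ < 1 + 2 * ε / 5 := by linarith
    have hdiff : ‖‖y‖⁻¹ • y - y‖ < 2 * ε / 5 := by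
      have e : ‖y‖⁻¹ • y - y = (‖y‖⁻¹ - 1) • y := by rw [sub_smul, one_smul]
      rw [e, norm_smul, Real.norm_eq_abs]
      have e2 : |‖y‖⁻¹ - 1| * ‖y‖ = |1 - ‖y‖| := by
        rw [← abs_of_pos hy0, ← abs_mul]
        congr 1
        field_simp
        rw [abs_of_pos hy0]; ring
      rw [e2]
      exact abs_lt.mpr ⟨by linarith, by linarith⟩
    refine ⟨hylow', hyupp', ?_, ?_⟩
    · calc ‖x + ‖y‖⁻¹ • y‖ = ‖(x + y) + (‖y‖⁻¹ • y - y)‖ := by congr 1; abel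
        _ ≤ ‖x + y‖ + ‖‖y‖⁻¹ • y - y‖ := norm_add_le _ _
        _ ≤ 1 + ε := by linarith
    · calc ‖x - ‖y‖⁻¹ • y‖ = ‖(x - y) - (‖y‖⁻¹ • y - y)‖ := by congr 1; abel
        _ ≤ ‖x - y‖ + ‖‖y‖⁻¹ • y - y‖ := norm_sub_le _ _
        _ ≤ 1 + ε := by linarith
end
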